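/- In dimension 6, the biharmonic potential of the Gaussian equals (e^{-|x|²} - 1 + |x|²)/(16|x|⁴) for x ≠ 0. -/

import Mathlib

open Real MeasureTheory

open Set Filter

lemma lemA {b : ℝ} (hb : 0 < b) :
    (∫ t in Ioi (0:ℝ), Real.exp (-(b * t))) = 1 / b := by
  have hderiv : ∀ t ∈ Ici (0:ℝ), HasDerivAt (fun t => -Real.exp (-(b * t)) / b)
      (Real.exp (-(b * t))) t := by
    intro t _
    have h1 : HasDerivAt (fun t : ℝ => -(b * t)) (-b) t := by
      simpa using (hasDerivAt_id t).const_mul (-b)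
    have h2 := (h1.exp).neg.div_const b
    convert h2 using 1
    · rfl
    · rfl
    · rfl
    · field_simp
  have htend : Tendsto (fun t => -Real.exp (-(b * t)) / b) atTop (nhds 0) := by
    have : Tendsto (fun t : ℝ => -(b * t)) atTop atBot :=
      tendsto_neg_atTop_atBot.comp (tendsto_id.const_mul_atTop hb)
    have := (Real.tendsto_exp_atBot.comp this).neg.div_const b
    simpa using this
  have := integral_Ioi_of_hasDerivAt_of_nonneg' hderiv
    (fun t _ => (Real.exp_pos _).le) htend
  rw [this]; simp [neg_div]

lemma lemA' {b : ℝ} (hb : 0 < b) :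
    IntegrableOn (fun t => Real.exp (-(b * t))) (Ioi (0:ℝ)) := by
  simpa using exp_neg_integrableOn_Ioi 0 hb

section B
variable {a : ℝ} (ha : 0 < a)

noncomputable def Hf (a t : ℝ) : ℝ :=
  Real.exp (-(a * t / (1 + t))) * (1 / a ^ 2 - 1 / (a * (1 + t)))

lemma Hf_deriv {a : ℝ} (ha : 0 < a) : ∀ t ∈ Ici (0:ℝ), HasDerivAt (Hf a)
    (1 / (1 + t) ^ 3 * Real.exp (-(a * t / (1 + t)))) t := by
  intro t ht
  have ht1 : (0:ℝ) < 1 + t := by simp at ht; linarith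
  have hu : HasDerivAt (fun t : ℝ => -(a * t / (1 + t))) (-(a / (1 + t) ^ 2)) t := by
    have h1 : HasDerivAt (fun t : ℝ => a * t) a t := by
      simpa using (hasDerivAt_id t).const_mul a
    have h2 : HasDerivAt (fun t : ℝ => 1 + t) 1 t := by
      simpa using (hasDerivAt_id t).const_add 1
    have := (h1.div h2 ht1.ne').neg
    convert this using 1
    · rfl
    · rfl
    · rfl
    · field_simp
      ring
  have hv : HasDerivAt (fun t : ℝ => 1 / a ^ 2 - 1 / (a * (1 + t)))
      (1 / (a * (1 + t) ^ 2)) t := by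
    have h2 : HasDerivAt (fun t : ℝ => a * (1 + t)) a t := by
      simpa using ((hasDerivAt_id t).const_add 1).const_mul a
    have h3 := (h2.inv (by positivity)).const_sub (1 / a ^ 2)
    convert h3 using 1
    · rfl
    · rfl
    · ext s; simp [one_div]
    · field_simp
  have := (hu.exp).mul hv
  convert this using 1
  · rfl
  · rfl
  · rfl
  · field_simp
    ring

lemma Hf_tendsto {a : ℝ} (ha : 0 < a) :
    Tendsto (Hf a) atTop (nhds (Real.exp (-a) / a ^ 2)) := by
  have h1 : Tendsto (fun t : ℝ => 1 + t) atTop atTop :=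
    tendsto_atTop_add_const_left _ 1 tendsto_id
  have h2 : Tendsto (fun t : ℝ => 1 / (1 + t)) atTop (nhds 0) := by
    simpa [one_div, Function.comp_def] using tendsto_inv_atTop_zero.comp h1
  have hu : Tendsto (fun t : ℝ => -(a * t / (1 + t))) atTop (nhds (-a)) := by
    have : Tendsto (fun t : ℝ => a * t / (1 + t)) atTop (nhds a) := by
      have heq : ∀ᶠ t : ℝ in atTop, a * t / (1 + t) = a - a * (1 / (1 + t)) := by
        filter_upwards [eventually_gt_atTop (0:ℝ)] with t ht
        have : (1 + t) ≠ 0 := by positivity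
        field_simp
        ring
      rw [tendsto_congr' heq]
      simpa using (tendsto_const_nhds (x := a)).sub (h2.const_mul a)
    exact this.neg
  have h3 : Tendsto (fun t : ℝ => 1 / (a * (1 + t))) atTop (nhds 0) := by
    have := h2.const_mul (1/a)
    simp only [mul_zero] at this
    convert this using 2 with t
    field_simp
  have hv : Tendsto (fun t : ℝ => 1 / a ^ 2 - 1 / (a * (1 + t))) atTop
      (nhds (1 / a ^ 2 - 0)) := (tendsto_const_nhds (x := 1 / a ^ 2)).sub h3
  have hfin := ((Real.continuous_exp.tendsto (-a)).comp hu).mul hv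
  simp only [Function.comp, sub_zero] at hfin
  have : Real.exp (-a) / a ^ 2 = Real.exp (-a) * (1 / a ^ 2) := by ring
  rw [this]
  exact hfin

lemma lemB {a : ℝ} (ha : 0 < a) :
    (∫ t in Ioi (0:ℝ), 1 / (1 + t) ^ 3 * Real.exp (-(a * t / (1 + t)))) =
      (Real.exp (-a) - 1 + a) / a ^ 2 := by
  have := integral_Ioi_of_hasDerivAt_of_nonneg' (Hf_deriv ha)
    (fun t ht => by
      have h1 : (0:ℝ) < 1 + t := by simp at ht; linarith
      positivity) (Hf_tendsto ha)
  rw [this]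
  unfold Hf
  simp only [mul_zero, zero_div, add_zero, neg_zero, Real.exp_zero, mul_one, one_mul]
  field_simp
  ring

lemma lemB' {a : ℝ} (ha : 0 < a) :
    IntegrableOn (fun t => 1 / (1 + t) ^ 3 * Real.exp (-(a * t / (1 + t)))) (Ioi (0:ℝ)) :=
  integrableOn_Ioi_deriv_of_nonneg' (Hf_deriv ha) (fun t ht => by
      have h1 : (0:ℝ) < 1 + t := by simp at ht; linarith
      positivity) (Hf_tendsto ha)

end B

notation "E6" => EuclideanSpace ℝ (Fin 6)

lemma sq_complete (t : ℝ) (ht1 : (0:ℝ) < 1 + t) (x y : E6) :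
    ‖y‖ ^ 2 + t * ‖x - y‖ ^ 2 =
      (1 + t) * ‖y - (t / (1 + t)) • x‖ ^ 2 + t * ‖x‖ ^ 2 / (1 + t) := by
  have h1 : ‖x - y‖ ^ 2 = ‖x‖ ^ 2 - 2 * inner ℝ x y + ‖y‖ ^ 2 :=
    @norm_sub_sq_real E6 _ _ x y
  have h2 : ‖y - (t / (1 + t)) • x‖ ^ 2
      = ‖y‖ ^ 2 - 2 * ((t / (1 + t)) * inner ℝ x y) + (t / (1 + t)) ^ 2 * ‖x‖ ^ 2 := by
    rw [@norm_sub_sq_real E6 _ _ y ((t / (1 + t)) • x)]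
    rw [real_inner_smul_right, norm_smul]
    rw [real_inner_comm]
    congr 1
    rw [mul_pow]
    congr 1
    rw [Real.norm_eq_abs, sq_abs, div_pow]
  rw [h1, h2]
  field_simp
  ring

lemma integrable_gauss6 {b : ℝ} (hb : 0 < b) :
    Integrable (fun y : E6 => Real.exp (-(b * ‖y‖ ^ 2))) := by
  have := (GaussianFourier.integrable_cexp_neg_mul_sq_norm_add (V := E6)
    (b := (b:ℂ)) (by simpa using hb) 0 0).norm
  convert this using 2 with y
  simp [Complex.norm_exp, ← Complex.ofReal_pow]

lemma integral_gauss6 {b : ℝ} (hb : 0 < b) :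
    (∫ y : E6, Real.exp (-(b * ‖y‖ ^ 2))) = (π / b) ^ 3 := by
  have := GaussianFourier.integral_rexp_neg_mul_sq_norm (V := E6) hb
  simp only [neg_mul] at this ⊢
  rw [this, finrank_euclideanSpace_fin,
    show ((6:ℕ):ℝ)/2 = ((3:ℕ):ℝ) by norm_num, Real.rpow_natCast]

lemma lemC {t : ℝ} (ht : 0 < t) (x : E6) :
    (∫ y : E6, Real.exp (-(‖y‖ ^ 2 + t * ‖x - y‖ ^ 2))) =
      π ^ 3 * (1 / (1 + t) ^ 3) * Real.exp (-(t * ‖x‖ ^ 2 / (1 + t))) := by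
  have ht1 : (0:ℝ) < 1 + t := by linarith
  have hrw : ∀ y : E6, Real.exp (-(‖y‖ ^ 2 + t * ‖x - y‖ ^ 2)) =
      Real.exp (-((1 + t) * ‖y - (t / (1 + t)) • x‖ ^ 2)) *
        Real.exp (-(t * ‖x‖ ^ 2 / (1 + t))) := by
    intro y
    rw [← Real.exp_add, sq_complete t ht1 x y]
    ring_nf
  simp_rw [hrw]
  rw [integral_mul_const]
  rw [integral_sub_right_eq_self (fun y : E6 => Real.exp (-((1 + t) * ‖y‖ ^ 2)))
    ((t / (1 + t)) • x)]
  rw [integral_gauss6 ht1]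
  rw [div_pow]
  ring

lemma lemC' {t : ℝ} (ht : 0 < t) (x : E6) :
    Integrable (fun y : E6 => Real.exp (-(‖y‖ ^ 2 + t * ‖x - y‖ ^ 2))) := by
  have ht1 : (0:ℝ) < 1 + t := by linarith
  have h := ((integrable_gauss6 ht1).comp_sub_right ((t / (1 + t)) • x)).mul_const
    (Real.exp (-(t * ‖x‖ ^ 2 / (1 + t))))
  apply h.congr
  filter_upwards with y
  rw [← Real.exp_add, sq_complete t ht1 x y]
  ring_nf

/-- In dimension 6, the biharmonic potential of the Gaussian equals
`(e^{-|x|²} - 1 + |x|²)/(16|x|⁴)` for `x ≠ 0`. -/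
theorem biharmonic6_gaussian (x : EuclideanSpace ℝ (Fin 6)) (hx : x ≠ 0) :
    (Real.Gamma 3 / (4 * Real.pi ^ 3 * 4 * 2)) *
      (∫ y : EuclideanSpace ℝ (Fin 6), Real.exp (-‖y‖ ^ 2) / ‖x - y‖ ^ 2) =
    (Real.exp (-‖x‖ ^ 2) - 1 + ‖x‖ ^ 2) / (16 * ‖x‖ ^ 4) := by
  have hxn : ‖x‖ ≠ 0 := norm_ne_zero_iff.mpr hx
  have ha : (0:ℝ) < ‖x‖ ^ 2 := by positivity
  -- the key integral computation
  have key : (∫ y : EuclideanSpace ℝ (Fin 6), Real.exp (-‖y‖ ^ 2) / ‖x - y‖ ^ 2) =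
      π ^ 3 * ((Real.exp (-‖x‖ ^ 2) - 1 + ‖x‖ ^ 2) / (‖x‖ ^ 2) ^ 2) := by
    have hmeas : AEStronglyMeasurable (fun y : EuclideanSpace ℝ (Fin 6) => Real.exp (-‖y‖ ^ 2) / ‖x - y‖ ^ 2)
        (volume : Measure (EuclideanSpace ℝ (Fin 6))) := by
      apply Measurable.aestronglyMeasurable
      exact ((Real.continuous_exp.comp (continuous_norm.pow 2).neg).measurable).div
        ((continuous_const.sub continuous_id).norm.pow 2).measurable
    rw [integral_eq_lintegral_of_nonneg_ae
      (Filter.Eventually.of_forall fun y => by positivity) hmeas]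
    have hval : (∫⁻ y : EuclideanSpace ℝ (Fin 6), ENNReal.ofReal (Real.exp (-‖y‖ ^ 2) / ‖x - y‖ ^ 2)) =
        ENNReal.ofReal (π ^ 3 * ((Real.exp (-‖x‖ ^ 2) - 1 + ‖x‖ ^ 2) / (‖x‖ ^ 2) ^ 2)) := by
      -- step 1: express as double lintegral
      have step1 : (∫⁻ y : EuclideanSpace ℝ (Fin 6), ENNReal.ofReal (Real.exp (-‖y‖ ^ 2) / ‖x - y‖ ^ 2)) =
          ∫⁻ y : EuclideanSpace ℝ (Fin 6), ∫⁻ t in Ioi (0:ℝ),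
            ENNReal.ofReal (Real.exp (-(‖y‖ ^ 2 + t * ‖x - y‖ ^ 2))) := by
        apply lintegral_congr_ae
        have hne : ∀ᵐ y : EuclideanSpace ℝ (Fin 6), y ≠ x := by
          rw [ae_iff]
          simpa using measure_singleton (α := EuclideanSpace ℝ (Fin 6)) x
        filter_upwards [hne] with y hy
        have hb : (0:ℝ) < ‖x - y‖ ^ 2 := by
          have hxy : x - y ≠ 0 := sub_ne_zero.mpr (Ne.symm hy)
          exact pow_pos (norm_pos_iff.mpr hxy) 2
        have : (∫⁻ t in Ioi (0:ℝ),
            ENNReal.ofReal (Real.exp (-(‖y‖ ^ 2 + t * ‖x - y‖ ^ 2)))) =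
            ENNReal.ofReal (Real.exp (-‖y‖ ^ 2) / ‖x - y‖ ^ 2) := by
          have heq : ∀ t : ℝ, Real.exp (-(‖y‖ ^ 2 + t * ‖x - y‖ ^ 2)) =
              Real.exp (-‖y‖ ^ 2) * Real.exp (-(‖x - y‖ ^ 2 * t)) := by
            intro t; rw [← Real.exp_add]; ring_nf
          simp_rw [heq]
          rw [← ofReal_integral_eq_lintegral_ofReal
            (((lemA' hb).const_mul (Real.exp (-‖y‖ ^ 2))))
            (Filter.Eventually.of_forall fun t => by positivity)]
          rw [MeasureTheory.integral_const_mul, lemA hb]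
          rw [mul_one_div]
        exact this.symm
      rw [step1]
      -- step 2: swap
      have step2 : (∫⁻ y : EuclideanSpace ℝ (Fin 6), ∫⁻ t in Ioi (0:ℝ),
            ENNReal.ofReal (Real.exp (-(‖y‖ ^ 2 + t * ‖x - y‖ ^ 2)))) =
          ∫⁻ t in Ioi (0:ℝ), ∫⁻ y : EuclideanSpace ℝ (Fin 6),
            ENNReal.ofReal (Real.exp (-(‖y‖ ^ 2 + t * ‖x - y‖ ^ 2))) := by
        apply lintegral_lintegral_swap
        apply Measurable.aemeasurable
        apply ENNReal.measurable_ofReal.comp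
        apply Continuous.measurable
        exact Real.continuous_exp.comp
          (((continuous_norm.comp continuous_fst).pow 2).add
            (continuous_snd.mul
              (((continuous_const.sub continuous_fst).norm).pow 2))).neg
      rw [step2]
      -- step 3: inner Gaussian integral
      have step3 : (∫⁻ t in Ioi (0:ℝ), ∫⁻ y : EuclideanSpace ℝ (Fin 6),
            ENNReal.ofReal (Real.exp (-(‖y‖ ^ 2 + t * ‖x - y‖ ^ 2)))) =
          ∫⁻ t in Ioi (0:ℝ), ENNReal.ofReal
            (π ^ 3 * (1 / (1 + t) ^ 3 * Real.exp (-(‖x‖ ^ 2 * t / (1 + t))))) := by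
        apply setLIntegral_congr_fun measurableSet_Ioi
        intro t ht
        beta_reduce
        rw [← ofReal_integral_eq_lintegral_ofReal (lemC' ht x)
          (Filter.Eventually.of_forall fun y => by positivity)]
        rw [lemC ht x, mul_assoc, mul_comm t (‖x‖ ^ 2)]
      rw [step3]
      -- step 4: outer integral
      rw [← ofReal_integral_eq_lintegral_ofReal ((lemB' ha).const_mul (π ^ 3))
        ((ae_restrict_iff' measurableSet_Ioi).2 (Filter.Eventually.of_forall fun t ht => by
          have h1t : (0:ℝ) < 1 + t := by have := mem_Ioi.mp ht; linarith
          positivity))]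
      rw [MeasureTheory.integral_const_mul, lemB ha]
    rw [hval, ENNReal.toReal_ofReal]
    have h1 : 0 ≤ Real.exp (-‖x‖ ^ 2) - 1 + ‖x‖ ^ 2 := by
      nlinarith [Real.add_one_le_exp (-‖x‖ ^ 2)]
    positivity
  rw [key]
  have hg : Real.Gamma 3 = 2 := by
    rw [show (3:ℝ) = ((2:ℕ):ℝ) + 1 by norm_num, Real.Gamma_nat_eq_factorial]
    norm_num
  rw [hg]
  have hπ : (π : ℝ) ≠ 0 := Real.pi_ne_zero
  field_simp
  ring
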